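/- In the ring R = k[x,y,z,u]/(x²+yz, xy−yu, xz, xu, y²), the element yz is nonzero and lies in the socle of R; that is, yz ≠ 0 in R and 𝔪·(yz) = 0, where 𝔪 = (x,y,z,u) is the maximal ideal generated by the residue classes of the variables. -/
import Mathlib

open MvPolynomial

set_option synthInstance.maxHeartbeats 1000000
set_option maxHeartbeats 1000000

noncomputable section

/-- The defining ideal `(x²+yz, xy−yu, xz, xu, y²)` of Conca's ring, with
`x = X 0`, `y = X 1`, `z = X 2`, `u = X 3`. -/
def concaIdeal (k : Type*) [Field k] : Ideal (MvPolynomial (Fin 4) k) :=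
  Ideal.span {X 0 ^ 2 + X 1 * X 2, X 0 * X 1 - X 1 * X 3, X 0 * X 2, X 0 * X 3, X 1 ^ 2}

/-- The ring `R = k[x,y,z,u]/(x²+yz, xy−yu, xz, xu, y²)`. -/
abbrev ConcaRing (k : Type*) [Field k] := MvPolynomial (Fin 4) k ⧸ concaIdeal k

/-- The residue classes of the variables `x, y, z, u` in `R`. -/
def cv (k : Type*) [Field k] (i : Fin 4) : ConcaRing k :=
  Ideal.Quotient.mk (concaIdeal k) (X i)

namespace ConcaAux

variable {k : Type*} [Field k]

def mm (i j : Fin 4) : Fin 4 →₀ ℕ := Finsupp.single i 1 + Finsupp.single j 1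

lemma hXX (i j : Fin 4) : (X i * X j : MvPolynomial (Fin 4) k) = monomial (mm i j) 1 := by
  rw [X, X, monomial_mul, one_mul, mm]

lemma coeff_PXX (p : MvPolynomial (Fin 4) k) (i j : Fin 4) (m : Fin 4 →₀ ℕ) :
    coeff m (p * (X i * X j)) =
      if mm i j ≤ m then coeff (m - mm i j) p else 0 := by
  rw [hXX, coeff_mul_monomial', mul_one]

lemma coeff_PXX_self (p : MvPolynomial (Fin 4) k) (i j : Fin 4) :
    coeff (mm i j) (p * (X i * X j)) = coeff 0 p := by
  rw [coeff_PXX, if_pos le_rfl]; simp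

lemma coeff_PXX_ne (p : MvPolynomial (Fin 4) k) (i j : Fin 4) (m : Fin 4 →₀ ℕ)
    (a : Fin 4) (h : m a < (mm i j) a) :
    coeff m (p * (X i * X j)) = 0 := by
  rw [coeff_PXX, if_neg]
  intro hle
  exact absurd (hle a) (not_le.mpr h)

lemma key (q : MvPolynomial (Fin 4) k) (hq : q ∈ concaIdeal k) (p : MvPolynomial (Fin 4) k) :
    coeff (mm 1 2) (p * q) = coeff (mm 0 0) (p * q) := by
  induction hq using Submodule.span_induction generalizing p with
  | mem g hg =>
    simp only [Set.mem_insert_iff, Set.mem_singleton_iff] at hg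
    rcases hg with rfl | rfl | rfl | rfl | rfl
    · rw [sq, mul_add]
      rw [coeff_add, coeff_add,
        coeff_PXX_ne p 0 0 (mm 1 2) 0 (by simp [mm, Finsupp.single_apply]),
        coeff_PXX_self p 1 2, coeff_PXX_self p 0 0,
        coeff_PXX_ne p 1 2 (mm 0 0) 1 (by simp [mm, Finsupp.single_apply])]
      abel
    · rw [mul_sub, coeff_sub, coeff_sub,
        coeff_PXX_ne p 0 1 (mm 1 2) 0 (by simp [mm, Finsupp.single_apply]),
        coeff_PXX_ne p 1 3 (mm 1 2) 3 (by simp [mm, Finsupp.single_apply]),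
        coeff_PXX_ne p 0 1 (mm 0 0) 1 (by simp [mm, Finsupp.single_apply]),
        coeff_PXX_ne p 1 3 (mm 0 0) 1 (by simp [mm, Finsupp.single_apply])]
    · rw [coeff_PXX_ne p 0 2 (mm 1 2) 0 (by simp [mm, Finsupp.single_apply]),
        coeff_PXX_ne p 0 2 (mm 0 0) 2 (by simp [mm, Finsupp.single_apply])]
    · rw [coeff_PXX_ne p 0 3 (mm 1 2) 0 (by simp [mm, Finsupp.single_apply]),
        coeff_PXX_ne p 0 3 (mm 0 0) 3 (by simp [mm, Finsupp.single_apply])]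
    · rw [sq,
        coeff_PXX_ne p 1 1 (mm 1 2) 1 (by simp [mm, Finsupp.single_apply]),
        coeff_PXX_ne p 1 1 (mm 0 0) 1 (by simp [mm, Finsupp.single_apply])]
  | zero => simp
  | add a b _ _ ha hb => simp only [mul_add, coeff_add, ha p, hb p]
  | smul r a _ ha =>
    have : p * (r • a) = (p * r) * a := by
      rw [smul_eq_mul]; ring
    rw [this, ha]

lemma yz_not_mem : (X 1 * X 2 : MvPolynomial (Fin 4) k) ∉ concaIdeal k := by
  intro h
  have := key _ h 1
  rw [one_mul] at this
  rw [hXX] at this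
  rw [coeff_monomial, coeff_monomial, if_pos rfl, if_neg] at this
  · exact one_ne_zero this
  · intro he
    have := DFunLike.congr_fun he (0 : Fin 4)
    simp [mm, Finsupp.single_apply] at this

lemma mem_gen (g : MvPolynomial (Fin 4) k)
    (hg : g ∈ ({X 0 ^ 2 + X 1 * X 2, X 0 * X 1 - X 1 * X 3, X 0 * X 2, X 0 * X 3, X 1 ^ 2} :
      Set (MvPolynomial (Fin 4) k))) : g ∈ concaIdeal k :=
  Ideal.subset_span hg

lemma var_mul_yz_mem (i : Fin 4) : (X i * (X 1 * X 2) : MvPolynomial (Fin 4) k) ∈ concaIdeal k := by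
  fin_cases i
  · show (X 0 * (X 1 * X 2) : MvPolynomial (Fin 4) k) ∈ concaIdeal k
    have : (X 0 * (X 1 * X 2) : MvPolynomial (Fin 4) k) = X 1 * (X 0 * X 2) := by ring
    rw [this]
    exact Ideal.mul_mem_left _ _ (mem_gen _ (by simp))
  · show (X 1 * (X 1 * X 2) : MvPolynomial (Fin 4) k) ∈ concaIdeal k
    have : (X 1 * (X 1 * X 2) : MvPolynomial (Fin 4) k) = X 2 * (X 1 ^ 2) := by ring
    rw [this]
    exact Ideal.mul_mem_left _ _ (mem_gen _ (by simp))
  · show (X 2 * (X 1 * X 2) : MvPolynomial (Fin 4) k) ∈ concaIdeal k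
    have : (X 2 * (X 1 * X 2) : MvPolynomial (Fin 4) k)
        = X 2 * (X 0 ^ 2 + X 1 * X 2) + (- X 0) * (X 0 * X 2) := by ring
    rw [this]
    exact Ideal.add_mem _ (Ideal.mul_mem_left _ _ (mem_gen _ (by simp)))
      (Ideal.mul_mem_left _ _ (mem_gen _ (by simp)))
  · show (X 3 * (X 1 * X 2) : MvPolynomial (Fin 4) k) ∈ concaIdeal k
    have : (X 3 * (X 1 * X 2) : MvPolynomial (Fin 4) k)
        = X 3 * (X 0 ^ 2 + X 1 * X 2) + (- X 0) * (X 0 * X 3) := by ring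
    rw [this]
    exact Ideal.add_mem _ (Ideal.mul_mem_left _ _ (mem_gen _ (by simp)))
      (Ideal.mul_mem_left _ _ (mem_gen _ (by simp)))

end ConcaAux

theorem stmt_7 (k : Type*) [Field k] :
    cv k 1 * cv k 2 ≠ 0 ∧
    Ideal.span {cv k 0, cv k 1, cv k 2, cv k 3} * Ideal.span {cv k 1 * cv k 2} =
      (⊥ : Ideal (ConcaRing k)) := by
  constructor
  · intro h
    have : cv k 1 * cv k 2 = Ideal.Quotient.mk (concaIdeal k) (X 1 * X 2) := by
      simp [cv, map_mul]
    rw [this, Ideal.Quotient.eq_zero_iff_mem] at h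
    exact ConcaAux.yz_not_mem h
  · rw [eq_bot_iff, Ideal.mul_le]
    intro r hr s hs
    rw [Ideal.mem_span_singleton] at hs
    obtain ⟨t, rfl⟩ := hs
    rw [Submodule.mem_bot]
    have hvar : ∀ i : Fin 4, cv k i * (cv k 1 * cv k 2) = 0 := by
      intro i
      have : cv k i * (cv k 1 * cv k 2)
          = Ideal.Quotient.mk (concaIdeal k) (X i * (X 1 * X 2)) := by simp [cv]
      rw [this, Ideal.Quotient.eq_zero_iff_mem]
      exact ConcaAux.var_mul_yz_mem i
    have hr0 : r * (cv k 1 * cv k 2) = 0 := by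
      induction hr using Submodule.span_induction with
      | mem g hg =>
        simp only [Set.mem_insert_iff, Set.mem_singleton_iff] at hg
        rcases hg with rfl | rfl | rfl | rfl <;> [exact hvar 0; exact hvar 1; exact hvar 2;
          exact hvar 3]
      | zero => simp
      | add a b _ _ ha hb => rw [add_mul, ha, hb, add_zero]
      | smul c a _ ha => rw [smul_eq_mul, mul_assoc, ha, mul_zero]
    calc r * (cv k 1 * cv k 2 * t) = (r * (cv k 1 * cv k 2)) * t := by ring
    _ = 0 := by rw [hr0, zero_mul]
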